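/- Conjugation of superpartitions, defined by Λ' = ((Λ*)', (Λ^⊛)') in the (Λ*, Λ^⊛) description, is a well-defined involution on superpartitions (i.e., the pair ((Λ*)', (Λ^⊛)') is again a valid superpartition of the same fermionic degree, and (Λ')' = Λ), and it reverses the dominance order: Λ ≤ Ω if and only if Ω' ≤ Λ'. -/

import Mathlib

/-- A function `ℕ → ℕ` represents a partition: non-increasing and eventually zero. -/
def IsPartitionFn (f : ℕ → ℕ) : Prop :=
  (∀ ⦃i j : ℕ⦄, i ≤ j → f j ≤ f i) ∧ ∃ N, ∀ i, N ≤ i → f i = 0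

/-- The cell `(i,j)` (0-indexed) belongs to the skew diagram `mu/lam`. -/
def SkewCell (lam mu : ℕ → ℕ) (i j : ℕ) : Prop := lam i ≤ j ∧ j < mu i

/-- The skew diagram `mu/lam` has at most one cell in each column. -/
def HorizStrip (lam mu : ℕ → ℕ) : Prop :=
  ∀ j i i', SkewCell lam mu i j → SkewCell lam mu i' j → i = i'

/-- The skew diagram `mu/lam` has at most one cell in each row. -/
def VertStrip (lam mu : ℕ → ℕ) : Prop := ∀ i, mu i ≤ lam i + 1

/-- The conjugate (transpose) of a partition function. -/
noncomputable def conjFn (f : ℕ → ℕ) : ℕ → ℕ := fun i => Set.ncard {j : ℕ | i < f j}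

/-- `(lam, mu)` is the `(Λ*, Λ^⊛)` description of a superpartition of fermionic
degree `m`. -/
def IsSuperPair (m : ℕ) (lam mu : ℕ → ℕ) : Prop :=
  IsPartitionFn lam ∧ IsPartitionFn mu ∧ (∀ i, lam i ≤ mu i) ∧
  HorizStrip lam mu ∧ VertStrip lam mu ∧ (∑ᶠ i, (mu i - lam i)) = m

/-- `f ≤ g` in dominance order (same size, and partial sums of `g` dominate). -/
def DomLe (f g : ℕ → ℕ) : Prop :=
  (∑ᶠ i, f i = ∑ᶠ i, g i) ∧
  ∀ k, ∑ i ∈ Finset.range k, f i ≤ ∑ i ∈ Finset.range k, g i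

section Aux

variable {f g : ℕ → ℕ}

lemma conj_lt_iff (hf : IsPartitionFn f) {i j : ℕ} : j < conjFn f i ↔ i < f j := by
  obtain ⟨hmono, N, hN⟩ := hf
  have hne : (setOf (fun j => f j ≤ i)).Nonempty := ⟨N, by show f N ≤ i; rw [hN N le_rfl]; exact Nat.zero_le _⟩
  set c := sInf {j | f j ≤ i} with hc
  have hset : {j : ℕ | i < f j} = Set.Iio c := by
    ext j
    simp only [Set.mem_setOf_eq, Set.mem_Iio]
    constructor
    · intro hij
      by_contra hcj
      push_neg at hcj
      have : f j ≤ f c := hmono hcj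
      have : f c ≤ i := Nat.sInf_mem hne
      omega
    · intro hjc
      have : ¬ f j ≤ i := fun hle =>
        absurd (Nat.sInf_le (show j ∈ {j | f j ≤ i} from hle)) (by omega)
      omega
  have : conjFn f i = c := by
    rw [conjFn, hset, ← Finset.coe_range, Set.ncard_coe_finset, Finset.card_range]
  rw [this]
  constructor
  · intro hjc
    have : ¬ f j ≤ i := fun hle =>
      absurd (Nat.sInf_le (show j ∈ {j | f j ≤ i} from hle)) (by omega)
    omega
  · intro hij
    by_contra hcj
    push_neg at hcj
    have h1 : f j ≤ f c := (‹∀ ⦃i j : ℕ⦄, i ≤ j → f j ≤ f i›) hcj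
    have h2 : f c ≤ i := Nat.sInf_mem hne
    omega

lemma conj_isPartitionFn (hf : IsPartitionFn f) : IsPartitionFn (conjFn f) := by
  constructor
  · intro i j hij
    by_contra hlt
    push_neg at hlt
    have h1 : conjFn f i < conjFn f j := hlt
    have : j < f (conjFn f i) := (conj_lt_iff hf).1 h1
    have : conjFn f i < conjFn f i := (conj_lt_iff hf).2 (lt_of_le_of_lt hij this)
    omega
  · refine ⟨f 0, fun i hi => ?_⟩
    by_contra hne
    have h0 : 0 < conjFn f i := Nat.pos_of_ne_zero hne
    have : i < f 0 := (conj_lt_iff hf).1 h0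
    omega

lemma conj_zero (hf : IsPartitionFn f) {j : ℕ} (hj : f 0 ≤ j) : conjFn f j = 0 := by
  by_contra hne
  have h0 : 0 < conjFn f j := Nat.pos_of_ne_zero hne
  have : j < f 0 := (conj_lt_iff hf).1 h0
  omega

lemma conj_conj (hf : IsPartitionFn f) : conjFn (conjFn f) = f := by
  funext i
  refine eq_of_forall_lt_iff fun j => ?_
  rw [conj_lt_iff (conj_isPartitionFn hf), conj_lt_iff hf]

lemma finsum_range {M : ℕ} (hM : ∀ i, M ≤ i → f i = 0) :
    ∑ᶠ i, f i = ∑ i ∈ Finset.range M, f i := by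
  refine finsum_eq_sum_of_support_subset f fun x hx => ?_
  simp only [Function.mem_support] at hx
  simp only [Finset.coe_range, Set.mem_Iio]
  by_contra hc
  exact hx (hM x (by omega))

lemma conj_card (_hf : IsPartitionFn f) {M : ℕ} (hM : ∀ i, M ≤ i → f i = 0) (j : ℕ) :
    conjFn f j = ((Finset.range M).filter (fun i => j < f i)).card := by
  rw [conjFn, ← Set.ncard_coe_finset]
  congr 1
  ext i
  simp only [Set.mem_setOf_eq, Finset.coe_filter, Finset.mem_range]
  constructor
  · intro hi
    refine ⟨?_, hi⟩
    by_contra hc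
    rw [hM i (by omega)] at hi; omega
  · exact fun h => h.2

lemma conj_sum_range (hf : IsPartitionFn f) {M : ℕ} (hM : ∀ i, M ≤ i → f i = 0) (k : ℕ) :
    ∑ j ∈ Finset.range k, conjFn f j = ∑ i ∈ Finset.range M, min (f i) k := by
  calc ∑ j ∈ Finset.range k, conjFn f j
      = ∑ j ∈ Finset.range k, ((Finset.range M).filter (fun i => j < f i)).card := by
        refine Finset.sum_congr rfl fun j _ => conj_card hf hM j
    _ = ∑ j ∈ Finset.range k, ∑ i ∈ Finset.range M, (if j < f i then 1 else 0) := by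
        refine Finset.sum_congr rfl fun j _ => ?_
        rw [Finset.card_filter]
    _ = ∑ i ∈ Finset.range M, ∑ j ∈ Finset.range k, (if j < f i then 1 else 0) :=
        Finset.sum_comm
    _ = ∑ i ∈ Finset.range M, min (f i) k := by
        refine Finset.sum_congr rfl fun i _ => ?_
        rw [← Finset.card_filter]
        have : (Finset.range k).filter (fun j => j < f i) = Finset.range (min (f i) k) := by
          ext j; simp only [Finset.mem_filter, Finset.mem_range, lt_min_iff]; omega
        rw [this, Finset.card_range]

lemma conj_finsum (hf : IsPartitionFn f) : ∑ᶠ i, conjFn f i = ∑ᶠ i, f i := by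
  obtain ⟨N, hN⟩ := id hf.2
  rw [finsum_range (fun j hj => conj_zero hf hj), finsum_range hN,
    conj_sum_range hf hN]
  refine Finset.sum_congr rfl fun i _ => ?_
  have : f i ≤ f 0 := hf.1 (Nat.zero_le i)
  omega

lemma dom_conj (hf : IsPartitionFn f) (hg : IsPartitionFn g) (h : DomLe f g) :
    DomLe (conjFn g) (conjFn f) := by
  refine ⟨by rw [conj_finsum hg, conj_finsum hf, h.1], fun k => ?_⟩
  obtain ⟨Nf, hNf⟩ := id hf.2
  obtain ⟨Ng, hNg⟩ := id hg.2
  set r := conjFn f k with hr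
  set M := max Nf Ng + r with hM
  have hMf : ∀ i, M ≤ i → f i = 0 := fun i hi => hNf i (by omega)
  have hMg : ∀ i, M ≤ i → g i = 0 := fun i hi => hNg i (by omega)
  have hrM : r ≤ M := by omega
  rw [conj_sum_range hg hMg, conj_sum_range hf hMf]
  have esplit : ∀ h : ℕ → ℕ, ∑ i ∈ Finset.range M, h i =
      ∑ i ∈ Finset.range r, h i + ∑ i ∈ Finset.Ico r M, h i := fun h => by
    rw [Finset.range_eq_Ico, ← Finset.sum_Ico_consecutive _ (Nat.zero_le r) hrM,
      ← Finset.range_eq_Ico]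
  have hfhead : ∑ i ∈ Finset.range r, min (f i) k = r * k := by
    rw [Finset.sum_congr rfl (fun i hi => ?_), Finset.sum_const, Finset.card_range,
      smul_eq_mul]
    have : k < f i := (conj_lt_iff hf).1 (Finset.mem_range.1 hi)
    omega
  have hftail : ∑ i ∈ Finset.Ico r M, min (f i) k = ∑ i ∈ Finset.Ico r M, f i := by
    refine Finset.sum_congr rfl fun i hi => ?_
    have hri : r ≤ i := (Finset.mem_Ico.1 hi).1
    have : f i ≤ k := by
      by_contra hc
      push_neg at hc
      have := (conj_lt_iff hf).2 hc
      omega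
    omega
  have hghead : ∑ i ∈ Finset.range r, min (g i) k ≤ r * k := by
    calc ∑ i ∈ Finset.range r, min (g i) k ≤ ∑ _i ∈ Finset.range r, k :=
          Finset.sum_le_sum fun i _ => Nat.min_le_right _ _
      _ = r * k := by rw [Finset.sum_const, Finset.card_range, smul_eq_mul]
  have hgtail : ∑ i ∈ Finset.Ico r M, min (g i) k ≤ ∑ i ∈ Finset.Ico r M, g i :=
    Finset.sum_le_sum fun i _ => Nat.min_le_left _ _
  have htotal : ∑ i ∈ Finset.range M, f i = ∑ i ∈ Finset.range M, g i := by
    rw [← finsum_range hMf, ← finsum_range hMg, h.1]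
  have hhead : ∑ i ∈ Finset.range r, f i ≤ ∑ i ∈ Finset.range r, g i := h.2 r
  have htail : ∑ i ∈ Finset.Ico r M, g i ≤ ∑ i ∈ Finset.Ico r M, f i := by
    have e1 := esplit f
    have e2 := esplit g
    omega
  have e1 := esplit (fun i => min (f i) k)
  have e2 := esplit (fun i => min (g i) k)
  omega

lemma finsum_sub_eq {lam mu : ℕ → ℕ} (hlam : IsPartitionFn lam) (hmu : IsPartitionFn mu)
    (hle : ∀ i, lam i ≤ mu i) :
    ∑ᶠ i, (mu i - lam i) = ∑ᶠ i, mu i - ∑ᶠ i, lam i := by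
  obtain ⟨Nl, hNl⟩ := id hlam.2
  obtain ⟨Nm, hNm⟩ := id hmu.2
  set M := max Nl Nm with hM
  have hMl : ∀ i, M ≤ i → lam i = 0 := fun i hi => hNl i (by omega)
  have hMm : ∀ i, M ≤ i → mu i = 0 := fun i hi => hNm i (by omega)
  rw [finsum_range (f := fun i => mu i - lam i) (M := M)
      (fun i hi => by rw [hMm i hi]; omega),
    finsum_range hMl, finsum_range hMm,
    Finset.sum_tsub_distrib _ (fun x _ => hle x)]

end Aux

theorem stmt5 (m : ℕ) (lam mu : ℕ → ℕ) (h : IsSuperPair m lam mu) :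
    IsSuperPair m (conjFn lam) (conjFn mu) ∧
    conjFn (conjFn lam) = lam ∧ conjFn (conjFn mu) = mu ∧
    (∀ lam' mu', IsSuperPair m lam' mu' →
      ((DomLe lam lam' ∧ DomLe mu mu') ↔
        (DomLe (conjFn lam') (conjFn lam) ∧ DomLe (conjFn mu') (conjFn mu)))) := by
  obtain ⟨hl, hm, hle, hH, hV, hdeg⟩ := h
  have hle' : ∀ i, conjFn lam i ≤ conjFn mu i := by
    intro i
    by_contra hc
    push_neg at hc
    have h1 : i < lam (conjFn mu i) := (conj_lt_iff hl).1 hc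
    have h2 : conjFn mu i < conjFn mu i :=
      (conj_lt_iff hm).2 (lt_of_lt_of_le h1 (hle _))
    omega
  have hH' : HorizStrip (conjFn lam) (conjFn mu) := by
    rintro j i i' ⟨h1, h2⟩ ⟨h3, h4⟩
    have a1 : lam j ≤ i := by
      by_contra hc
      push_neg at hc
      have := (conj_lt_iff hl).2 hc
      omega
    have a2 : i < mu j := (conj_lt_iff hm).1 h2
    have a3 : lam j ≤ i' := by
      by_contra hc
      push_neg at hc
      have := (conj_lt_iff hl).2 hc
      omega
    have a4 : i' < mu j := (conj_lt_iff hm).1 h4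
    have := hV j
    omega
  have hV' : VertStrip (conjFn lam) (conjFn mu) := by
    intro i
    by_contra hc
    push_neg at hc
    set j := conjFn lam i with hj
    have b1 : i < mu j := (conj_lt_iff hm).1 (by omega)
    have b2 : i < mu (j + 1) := (conj_lt_iff hm).1 (by omega)
    have b3 : lam j ≤ i := by
      by_contra hc2
      push_neg at hc2
      have := (conj_lt_iff hl).2 hc2
      omega
    have b4 : lam (j + 1) ≤ i := le_trans (hl.1 (Nat.le_succ j)) b3
    have := hH i j (j + 1) ⟨b3, b1⟩ ⟨b4, b2⟩
    omega
  have hdeg' : (∑ᶠ i, (conjFn mu i - conjFn lam i)) = m := by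
    rw [finsum_sub_eq (conj_isPartitionFn hl) (conj_isPartitionFn hm) hle',
      conj_finsum hl, conj_finsum hm, ← finsum_sub_eq hl hm hle, hdeg]
  refine ⟨⟨conj_isPartitionFn hl, conj_isPartitionFn hm, hle', hH', hV', hdeg'⟩,
    conj_conj hl, conj_conj hm, ?_⟩
  rintro lam' mu' ⟨hl', hm', -, -, -, -⟩
  constructor
  · rintro ⟨d1, d2⟩
    exact ⟨dom_conj hl hl' d1, dom_conj hm hm' d2⟩
  · rintro ⟨d1, d2⟩
    have e1 := dom_conj (conj_isPartitionFn hl') (conj_isPartitionFn hl) d1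
    have e2 := dom_conj (conj_isPartitionFn hm') (conj_isPartitionFn hm) d2
    rw [conj_conj hl, conj_conj hl'] at e1
    rw [conj_conj hm, conj_conj hm'] at e2
    exact ⟨e1, e2⟩
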